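/- Let G be a group, k a field, and kG its group algebra with standard Hopf structure. For a function a: G × G → k, define φ: kG ⊗ kG → kG by φ(x ⊗ y) = Σ_u a_u(x,y) u for x, y ∈ G. Then φ satisfies both adjoint 2-cocycle conditions: (i) ad(φ ⊗ 1) + φ(ad ⊗ 1) − φ(1 ⊗ μ) = 0 and (ii) (φ ⊗ μ)(1 ⊗ τ ⊗ 1)(Δ ⊗ Δ) = (1 ⊗ μ)(τ ⊗ 1)(1 ⊗ Δ)(1 ⊗ φ)(τ ⊗ 1)(1 ⊗ Δ), if and only if a_u(x,y) = 0 unless u = y⁻¹xy, and the function a(x,y) := a_{y⁻¹xy}(x,y) satisfies a(x,y) + a(x ◁ y, z) − a(x, yz) = 0 for all x, y, z ∈ G, where x ◁ y = y⁻¹xy. -/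

import Mathlib

open TensorProduct

variable (k G : Type*) [Field k] [Group G]

/-- The comultiplication of the group Hopf algebra `kG`: `Δ(g) = g ⊗ g`. -/
noncomputable def groupComul :
    MonoidAlgebra k G →ₗ[k] MonoidAlgebra k G ⊗[k] MonoidAlgebra k G :=
  (Finsupp.lsum k fun g =>
    LinearMap.toSpanSingleton k _ (MonoidAlgebra.of k G g ⊗ₜ[k] MonoidAlgebra.of k G g))
    ∘ₗ (MonoidAlgebra.coeffLinearEquiv k).toLinearMap

/-- The antipode of the group Hopf algebra `kG`: `S(g) = g⁻¹`. -/
noncomputable def groupAntipode : MonoidAlgebra k G →ₗ[k] MonoidAlgebra k G :=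
  (Finsupp.lsum k fun g => LinearMap.toSpanSingleton k _ (MonoidAlgebra.of k G g⁻¹))
    ∘ₗ (MonoidAlgebra.coeffLinearEquiv k).toLinearMap

/-- The adjoint map `ad(x ⊗ y) = S(y₁) x y₂` of the group Hopf algebra;
on group elements `ad(x ⊗ y) = y⁻¹ x y`. -/
noncomputable def groupAd :
    MonoidAlgebra k G ⊗[k] MonoidAlgebra k G →ₗ[k] MonoidAlgebra k G :=
  (LinearMap.mul' k _) ∘ₗ
    (TensorProduct.map
      ((LinearMap.mul' k _) ∘ₗ (TensorProduct.map (groupAntipode k G) LinearMap.id) ∘ₗ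
        (TensorProduct.comm k _ _).toLinearMap)
      LinearMap.id) ∘ₗ
    (TensorProduct.assoc k _ _ _).symm.toLinearMap ∘ₗ
    (TensorProduct.map LinearMap.id (groupComul k G))

/-- The transposition `τ ⊗ 1` on `kG ⊗ (kG ⊗ kG)`. -/
noncomputable def gTauOne :
    MonoidAlgebra k G ⊗[k] (MonoidAlgebra k G ⊗[k] MonoidAlgebra k G) →ₗ[k]
      MonoidAlgebra k G ⊗[k] (MonoidAlgebra k G ⊗[k] MonoidAlgebra k G) :=
  (TensorProduct.assoc k _ _ _).toLinearMap ∘ₗ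
    (TensorProduct.map (TensorProduct.comm k _ _).toLinearMap LinearMap.id) ∘ₗ
    (TensorProduct.assoc k _ _ _).symm.toLinearMap

noncomputable def tc2 : MonoidAlgebra k G ⊗[k] MonoidAlgebra k G ≃ₗ[k] (G × G →₀ k) :=
  (TensorProduct.congr (MonoidAlgebra.coeffLinearEquiv k) (MonoidAlgebra.coeffLinearEquiv k)).trans
    (finsuppTensorFinsupp' k G G)

variable {k G}

lemma tc2_tmul (a b : MonoidAlgebra k G) (u v : G) :
    tc2 k G (a ⊗ₜ[k] b) (u, v) = a.coeff u * b.coeff v := by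
  rw [tc2, LinearEquiv.trans_apply, TensorProduct.congr_tmul, finsuppTensorFinsupp'_apply_apply]
  rfl

lemma cle_single (u : G) (r : k) :
    MonoidAlgebra.coeffLinearEquiv k (MonoidAlgebra.single u r : MonoidAlgebra k G) =
      Finsupp.single u r := rfl

lemma comul_of (g : G) : groupComul k G (MonoidAlgebra.of k G g) =
    MonoidAlgebra.of k G g ⊗ₜ[k] MonoidAlgebra.of k G g := by
  rw [groupComul, MonoidAlgebra.of_apply]
  simp only [LinearMap.comp_apply, LinearEquiv.coe_coe, cle_single]
  erw [Finsupp.lsum_single]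
  simp [LinearMap.toSpanSingleton_apply]

lemma antipode_of (g : G) : groupAntipode k G (MonoidAlgebra.of k G g) =
    MonoidAlgebra.of k G g⁻¹ := by
  rw [groupAntipode, MonoidAlgebra.of_apply]
  simp only [LinearMap.comp_apply, LinearEquiv.coe_coe, cle_single]
  erw [Finsupp.lsum_single]
  simp [LinearMap.toSpanSingleton_apply]

lemma ad_of (x y : G) : groupAd k G (MonoidAlgebra.of k G x ⊗ₜ[k] MonoidAlgebra.of k G y) =
    MonoidAlgebra.of k G (y⁻¹ * x * y) := by
  simp only [groupAd, LinearMap.coe_comp, Function.comp_apply, LinearEquiv.coe_coe,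
    map_tmul, LinearMap.id_coe, id_eq, comul_of, assoc_symm_tmul, comm_tmul, antipode_of,
    LinearMap.mul'_apply, ← map_mul, mul_assoc]

lemma gTauOne_tmul (x y z : MonoidAlgebra k G) :
    gTauOne k G (x ⊗ₜ[k] (y ⊗ₜ[k] z)) = y ⊗ₜ[k] (x ⊗ₜ[k] z) := by
  simp [gTauOne]


open scoped Classical

lemma comul_single (u : G) (r : k) :
    groupComul k G (MonoidAlgebra.single u r) =
      r • (MonoidAlgebra.of k G u ⊗ₜ[k] MonoidAlgebra.of k G u) := by
  rw [groupComul]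
  simp only [LinearMap.comp_apply, LinearEquiv.coe_coe, cle_single]
  erw [Finsupp.lsum_single]
  simp [LinearMap.toSpanSingleton_apply]

lemma of_eq_smul (u : G) (r : k) :
    (MonoidAlgebra.single u r : MonoidAlgebra k G) = r • MonoidAlgebra.of k G u := by
  rw [MonoidAlgebra.smul_of]

lemma ad_coeff (c : MonoidAlgebra k G) (z w : G) :
    (groupAd k G (c ⊗ₜ[k] MonoidAlgebra.of k G z)).coeff w = c.coeff (z * w * z⁻¹) := by
  induction c using MonoidAlgebra.induction_linear with
  | zero => simp
  | add f g hf hg =>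
    rw [TensorProduct.add_tmul, (groupAd k G).map_add]
    rw [MonoidAlgebra.coeff_add, Finsupp.add_apply]
    rw [hf, hg, MonoidAlgebra.coeff_add, Finsupp.add_apply]
  | single u r =>
    rw [of_eq_smul, ← TensorProduct.smul_tmul', LinearMap.map_smul, ad_of]
    simp only [MonoidAlgebra.of_apply, MonoidAlgebra.smul_single', mul_one,
      MonoidAlgebra.coeff_single, Finsupp.single_apply]
    by_cases h : z⁻¹ * u * z = w
    · rw [if_pos h, if_pos (by rw [← h]; group)]
    · rw [if_neg h, if_neg (fun hu => h (by rw [hu]; group))]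

set_option synthInstance.maxHeartbeats 1000000 in
lemma rhs2_coeff (c : MonoidAlgebra k G) (y u v : G) :
    tc2 k G
      ((TensorProduct.map LinearMap.id (LinearMap.mul' k (MonoidAlgebra k G)) ∘ₗ gTauOne k G ∘ₗ
        TensorProduct.map LinearMap.id (groupComul k G))
          (MonoidAlgebra.of k G y ⊗ₜ[k] c)) (u, v) =
      if v = y * u then c.coeff u else 0 := by
  induction c using MonoidAlgebra.induction_linear with
  | zero => rw [TensorProduct.tmul_zero, map_zero, LinearEquiv.map_zero]; simp
  | add f g hf hg =>
    rw [TensorProduct.tmul_add,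
      (TensorProduct.map (LinearMap.id (R := k)) (LinearMap.mul' k (MonoidAlgebra k G)) ∘ₗ
        gTauOne k G ∘ₗ TensorProduct.map LinearMap.id (groupComul k G)).map_add,
      LinearEquiv.map_add]
    simp only [Finsupp.add_apply, MonoidAlgebra.coeff_add, hf, hg]
    split_ifs <;> simp
  | single u' r =>
    simp only [LinearMap.coe_comp, Function.comp_apply, map_tmul, LinearMap.id_coe, id_eq,
      comul_single, tmul_smul, LinearMap.map_smul, LinearEquiv.map_smul, gTauOne_tmul,
      LinearMap.mul'_apply, ← map_mul]
    simp only [Finsupp.smul_apply, tc2_tmul, MonoidAlgebra.of_apply, MonoidAlgebra.coeff_single,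
      Finsupp.single_apply, smul_eq_mul]
    by_cases h1 : u' = u
    · subst h1
      by_cases h2 : v = y * u' <;> simp [h2, eq_comm]
    · simp [h1, Finsupp.single_apply, Ne.symm h1]

lemma lhs2_coeff (c : MonoidAlgebra k G) (g u v : G) :
    tc2 k G (c ⊗ₜ[k] MonoidAlgebra.of k G g) (u, v) =
      if v = g then c.coeff u else 0 := by
  rw [tc2_tmul, MonoidAlgebra.of_apply, MonoidAlgebra.coeff_single]
  rw [Finsupp.single_apply]
  by_cases h : g = v <;> simp [h, eq_comm]



set_option synthInstance.maxHeartbeats 1000000 in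
set_option maxHeartbeats 1000000 in
lemma cond1_iff (φ : MonoidAlgebra k G ⊗[k] MonoidAlgebra k G →ₗ[k] MonoidAlgebra k G) :
    (groupAd k G ∘ₗ TensorProduct.map φ LinearMap.id +
        φ ∘ₗ TensorProduct.map (groupAd k G) LinearMap.id -
        φ ∘ₗ (TensorProduct.map LinearMap.id (LinearMap.mul' k _)) ∘ₗ
          (TensorProduct.assoc k _ _ _).toLinearMap = 0) ↔
    ∀ x y z w : G,
      (φ (MonoidAlgebra.of k G x ⊗ₜ[k] MonoidAlgebra.of k G y)).coeff (z * w * z⁻¹) +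
      (φ (MonoidAlgebra.of k G (y⁻¹ * x * y) ⊗ₜ[k] MonoidAlgebra.of k G z)).coeff w -
      (φ (MonoidAlgebra.of k G x ⊗ₜ[k] MonoidAlgebra.of k G (y * z))).coeff w = 0 := by
  have key : ∀ x y z w : G,
      ((groupAd k G ∘ₗ TensorProduct.map φ LinearMap.id +
        φ ∘ₗ TensorProduct.map (groupAd k G) LinearMap.id -
        φ ∘ₗ (TensorProduct.map LinearMap.id (LinearMap.mul' k _)) ∘ₗ
          (TensorProduct.assoc k _ _ _).toLinearMap)
        ((MonoidAlgebra.of k G x ⊗ₜ[k] MonoidAlgebra.of k G y) ⊗ₜ[k] MonoidAlgebra.of k G z)).coeff w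
      = (φ (MonoidAlgebra.of k G x ⊗ₜ[k] MonoidAlgebra.of k G y)).coeff (z * w * z⁻¹) +
        (φ (MonoidAlgebra.of k G (y⁻¹ * x * y) ⊗ₜ[k] MonoidAlgebra.of k G z)).coeff w -
        (φ (MonoidAlgebra.of k G x ⊗ₜ[k] MonoidAlgebra.of k G (y * z))).coeff w := by
    intro x y z w
    rw [LinearMap.sub_apply, LinearMap.add_apply]
    simp only [LinearMap.coe_comp, Function.comp_apply, LinearEquiv.coe_coe, assoc_tmul,
      map_tmul, LinearMap.id_coe, id_eq, ad_of, LinearMap.mul'_apply, ← map_mul]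
    rw [MonoidAlgebra.coeff_sub, MonoidAlgebra.coeff_add, Finsupp.sub_apply, Finsupp.add_apply]
    rw [ad_coeff]
  constructor
  · intro h x y z w
    rw [← key, h]
    rfl
  · intro h
    ext x y z w
    simp only [TensorProduct.AlgebraTensorModule.curry_apply, TensorProduct.curry_apply,
      LinearMap.coe_comp, Function.comp_apply, MonoidAlgebra.lsingle_apply,
      LinearMap.coe_restrictScalars, LinearMap.zero_apply, MonoidAlgebra.coeff_zero,
      Finsupp.coe_zero, Pi.zero_apply]
    rw [show (MonoidAlgebra.single x (1:k) : MonoidAlgebra k G) = MonoidAlgebra.of k G x from rfl,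
      show (MonoidAlgebra.single y (1:k) : MonoidAlgebra k G) = MonoidAlgebra.of k G y from rfl,
      show (MonoidAlgebra.single z (1:k) : MonoidAlgebra k G) = MonoidAlgebra.of k G z from rfl]
    rw [key x y z w]
    exact h x y z w

set_option synthInstance.maxHeartbeats 1000000 in
set_option maxHeartbeats 1000000 in
lemma cond2_iff (φ : MonoidAlgebra k G ⊗[k] MonoidAlgebra k G →ₗ[k] MonoidAlgebra k G) :
    (TensorProduct.map φ (LinearMap.mul' k _) ∘ₗ
          (TensorProduct.tensorTensorTensorComm k _ _ _ _).toLinearMap ∘ₗ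
          TensorProduct.map (groupComul k G) (groupComul k G) =
        TensorProduct.map LinearMap.id (LinearMap.mul' k _) ∘ₗ gTauOne k G ∘ₗ
          TensorProduct.map LinearMap.id (groupComul k G) ∘ₗ
          TensorProduct.map LinearMap.id φ ∘ₗ gTauOne k G ∘ₗ
          TensorProduct.map LinearMap.id (groupComul k G)) ↔
    ∀ x y u v : G,
      (if v = x * y then (φ (MonoidAlgebra.of k G x ⊗ₜ[k] MonoidAlgebra.of k G y)).coeff u else 0) =
      (if v = y * u then (φ (MonoidAlgebra.of k G x ⊗ₜ[k] MonoidAlgebra.of k G y)).coeff u else 0) := by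
  have key1 : ∀ x y u v : G,
      tc2 k G
        ((TensorProduct.map φ (LinearMap.mul' k _) ∘ₗ
          (TensorProduct.tensorTensorTensorComm k _ _ _ _).toLinearMap ∘ₗ
          TensorProduct.map (groupComul k G) (groupComul k G))
            (MonoidAlgebra.of k G x ⊗ₜ[k] MonoidAlgebra.of k G y)) (u, v) =
      if v = x * y then (φ (MonoidAlgebra.of k G x ⊗ₜ[k] MonoidAlgebra.of k G y)).coeff u else 0 := by
    intro x y u v
    simp only [LinearMap.coe_comp, Function.comp_apply, LinearEquiv.coe_coe, map_tmul,
      comul_of, tensorTensorTensorComm_tmul, LinearMap.mul'_apply, ← map_mul]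
    rw [lhs2_coeff]
  have key2 : ∀ x y u v : G,
      tc2 k G
        ((TensorProduct.map LinearMap.id (LinearMap.mul' k _) ∘ₗ gTauOne k G ∘ₗ
          TensorProduct.map LinearMap.id (groupComul k G) ∘ₗ
          TensorProduct.map LinearMap.id φ ∘ₗ gTauOne k G ∘ₗ
          TensorProduct.map LinearMap.id (groupComul k G))
            (MonoidAlgebra.of k G x ⊗ₜ[k] MonoidAlgebra.of k G y)) (u, v) =
      if v = y * u then (φ (MonoidAlgebra.of k G x ⊗ₜ[k] MonoidAlgebra.of k G y)).coeff u else 0 := by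
    intro x y u v
    have inner : (TensorProduct.map LinearMap.id φ
        (gTauOne k G (TensorProduct.map LinearMap.id (groupComul k G)
          (MonoidAlgebra.of k G x ⊗ₜ[k] MonoidAlgebra.of k G y)))) =
        MonoidAlgebra.of k G y ⊗ₜ[k] φ (MonoidAlgebra.of k G x ⊗ₜ[k] MonoidAlgebra.of k G y) := by
      simp only [map_tmul, LinearMap.id_coe, id_eq, comul_of, gTauOne_tmul]
    have h := rhs2_coeff (φ (MonoidAlgebra.of k G x ⊗ₜ[k] MonoidAlgebra.of k G y)) y u v
    simp only [LinearMap.coe_comp, Function.comp_apply] at h ⊢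
    rw [inner, h]
  constructor
  · intro h x y u v
    have := LinearMap.congr_fun h (MonoidAlgebra.of k G x ⊗ₜ[k] MonoidAlgebra.of k G y)
    rw [← key1 x y u v, ← key2 x y u v, this]
  · intro h
    ext x y
    simp only [TensorProduct.AlgebraTensorModule.curry_apply, TensorProduct.curry_apply,
      LinearMap.coe_comp, Function.comp_apply, MonoidAlgebra.lsingle_apply,
      LinearMap.coe_restrictScalars]
    rw [show (MonoidAlgebra.single x (1:k) : MonoidAlgebra k G) = MonoidAlgebra.of k G x from rfl,
      show (MonoidAlgebra.single y (1:k) : MonoidAlgebra k G) = MonoidAlgebra.of k G y from rfl]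
    apply (tc2 k G).injective
    apply Finsupp.ext
    rintro ⟨u, v⟩
    have h1 := key1 x y u v
    have h2 := key2 x y u v
    simp only [LinearMap.coe_comp, Function.comp_apply] at h1 h2
    rw [h1, h2]
    exact h x y u v

lemma comb (a : G → G → G → k)
    (h1 : ∀ x y z w : G, a (z * w * z⁻¹) x y + a w (y⁻¹ * x * y) z - a w x (y * z) = 0)
    (h2 : ∀ x y u v : G,
      (if v = x * y then a u x y else 0) = (if v = y * u then a u x y else 0)) :
    (∀ u x y : G, u ≠ y⁻¹ * x * y → a u x y = 0) ∧
      (∀ x y z : G, a (y⁻¹ * x * y) x y +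
        a (z⁻¹ * (y⁻¹ * x * y) * z) (y⁻¹ * x * y) z -
        a ((y * z)⁻¹ * x * (y * z)) x (y * z) = 0) := by
  have hv : ∀ u x y : G, u ≠ y⁻¹ * x * y → a u x y = 0 := by
    intro u x y hu
    have h := h2 x y u (x * y)
    rw [if_pos rfl] at h
    rw [h, if_neg]
    intro hq
    apply hu
    calc u = y⁻¹ * (y * u) := by group
    _ = y⁻¹ * (x * y) := by rw [← hq]
    _ = y⁻¹ * x * y := by group
  refine ⟨hv, ?_⟩
  intro x y z
  have hp := h1 x y z (z⁻¹ * (y⁻¹ * x * y) * z)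
  rw [show z * (z⁻¹ * (y⁻¹ * x * y) * z) * z⁻¹ = y⁻¹ * x * y from by group] at hp
  rw [show (y * z)⁻¹ * x * (y * z) = z⁻¹ * (y⁻¹ * x * y) * z from by group]
  exact hp

lemma comb' (a : G → G → G → k)
    (hv : ∀ u x y : G, u ≠ y⁻¹ * x * y → a u x y = 0)
    (hc : ∀ x y z : G, a (y⁻¹ * x * y) x y +
        a (z⁻¹ * (y⁻¹ * x * y) * z) (y⁻¹ * x * y) z -
        a ((y * z)⁻¹ * x * (y * z)) x (y * z) = 0) :
    (∀ x y z w : G, a (z * w * z⁻¹) x y + a w (y⁻¹ * x * y) z - a w x (y * z) = 0) ∧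
      (∀ x y u v : G,
        (if v = x * y then a u x y else 0) = (if v = y * u then a u x y else 0)) := by
  constructor
  · intro x y z w
    by_cases hw : w = z⁻¹ * (y⁻¹ * x * y) * z
    · subst hw
      have h := hc x y z
      rw [show (y * z)⁻¹ * x * (y * z) = z⁻¹ * (y⁻¹ * x * y) * z from by group] at h
      rw [show z * (z⁻¹ * (y⁻¹ * x * y) * z) * z⁻¹ = y⁻¹ * x * y from by group]
      exact h
    · rw [hv (z * w * z⁻¹) x y (fun hq => hw (by
          calc w = z⁻¹ * (z * w * z⁻¹) * z := by group
          _ = z⁻¹ * (y⁻¹ * x * y) * z := by rw [hq])),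
        hv w (y⁻¹ * x * y) z hw,
        hv w x (y * z) (fun hq => hw (by rw [hq]; group))]
      simp
  · intro x y u v
    by_cases hu : u = y⁻¹ * x * y
    · have h : x * y = y * u := by rw [hu]; group
      rw [← h]
    · rw [hv u x y hu]
      simp


variable (k G)

/-- A linear map `φ : kG ⊗ kG → kG`, with coefficients `a_u(x,y)` of `φ(x ⊗ y)`
on basis group elements, satisfies the two adjoint 2-cocycle conditions
`ad(φ ⊗ 1) + φ(ad ⊗ 1) − φ(1 ⊗ μ) = 0` and
`(φ ⊗ μ)(1 ⊗ τ ⊗ 1)(Δ ⊗ Δ) = (1 ⊗ μ)(τ ⊗ 1)(1 ⊗ Δ)(1 ⊗ φ)(τ ⊗ 1)(1 ⊗ Δ)`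
if and only if `a_u(x,y) = 0` unless `u = y⁻¹xy`, and
`a(x,y) := a_{y⁻¹xy}(x,y)` satisfies `a(x,y) + a(x ◁ y, z) − a(x, yz) = 0`. -/
theorem group_algebra_Z2_characterization
    (φ : MonoidAlgebra k G ⊗[k] MonoidAlgebra k G →ₗ[k] MonoidAlgebra k G) :
    letI a : G → G → G → k :=
      fun u x y => (φ (MonoidAlgebra.of k G x ⊗ₜ[k] MonoidAlgebra.of k G y)).coeff u
    ((groupAd k G ∘ₗ TensorProduct.map φ LinearMap.id +
        φ ∘ₗ TensorProduct.map (groupAd k G) LinearMap.id -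
        φ ∘ₗ (TensorProduct.map LinearMap.id (LinearMap.mul' k _)) ∘ₗ
          (TensorProduct.assoc k _ _ _).toLinearMap = 0) ∧
      (TensorProduct.map φ (LinearMap.mul' k _) ∘ₗ
          (TensorProduct.tensorTensorTensorComm k _ _ _ _).toLinearMap ∘ₗ
          TensorProduct.map (groupComul k G) (groupComul k G) =
        TensorProduct.map LinearMap.id (LinearMap.mul' k _) ∘ₗ gTauOne k G ∘ₗ
          TensorProduct.map LinearMap.id (groupComul k G) ∘ₗ
          TensorProduct.map LinearMap.id φ ∘ₗ gTauOne k G ∘ₗ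
          TensorProduct.map LinearMap.id (groupComul k G)))
    ↔ ((∀ u x y : G, u ≠ y⁻¹ * x * y → a u x y = 0) ∧
        (∀ x y z : G, a (y⁻¹ * x * y) x y +
          a (z⁻¹ * (y⁻¹ * x * y) * z) (y⁻¹ * x * y) z -
          a ((y * z)⁻¹ * x * (y * z)) x (y * z) = 0)) := by
  exact Iff.intro
    (fun h => comb (fun u x y => (φ (MonoidAlgebra.of k G x ⊗ₜ[k] MonoidAlgebra.of k G y)).coeff u)
      ((cond1_iff φ).mp h.1) ((cond2_iff φ).mp h.2))
    (fun h => ⟨(cond1_iff φ).mpr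
        (comb' (fun u x y => (φ (MonoidAlgebra.of k G x ⊗ₜ[k] MonoidAlgebra.of k G y)).coeff u)
          h.1 h.2).1,
      (cond2_iff φ).mpr
        (comb' (fun u x y => (φ (MonoidAlgebra.of k G x ⊗ₜ[k] MonoidAlgebra.of k G y)).coeff u)
          h.1 h.2).2⟩)
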